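/- Let ε ∈ [0,1), 0 ≤ p ≤ q < 1−ε, and c ≥ 0. If x ∈ [p, q] satisfies d(x/(1−ε), q/(1−ε)) = (1/(1+c)) · d(p/(1−ε), q/(1−ε)), then x ≤ (c/(1+c)) · q + (1/(1+c)) · p. -/

import Mathlib

open MeasureTheory ProbabilityTheory Filter Real
open scoped ENNReal

noncomputable section

/-- KL divergence between Bernoulli distributions of means `p` and `q` (real-valued version,
with the convention `0 * log 0 = 0`, which holds definitionally since `Real.log 0 = 0`). -/
def klBern (p q : ℝ) : ℝ :=
  p * Real.log (p / q) + (1 - p) * Real.log ((1 - p) / (1 - q))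

lemma klBern_eq_aux (t b : ℝ) (ht : 0 ≤ t) (ht1 : t ≤ 1) (hb : 0 < b) (hb1 : b < 1) :
    klBern t b = (t * Real.log t + (1 - t) * Real.log (1 - t))
      - (t * Real.log b + (1 - t) * Real.log (1 - b)) := by
  rcases eq_or_lt_of_le ht with h0 | h0
  · rw [klBern, ← h0]
    norm_num [Real.log_div one_ne_zero (by linarith : (1:ℝ) - b ≠ 0)]
  rcases eq_or_lt_of_le ht1 with h1 | h1
  · rw [klBern, h1]
    norm_num [Real.log_div one_ne_zero hb.ne']
  rw [klBern, Real.log_div (by linarith) hb.ne',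
    Real.log_div (by linarith : (1:ℝ) - t ≠ 0) (by linarith : (1:ℝ) - b ≠ 0)]
  ring

lemma klBern_self (b : ℝ) : klBern b b = 0 := by
  rcases eq_or_ne b 0 with rfl | hb
  · norm_num [klBern]
  rcases eq_or_ne b 1 with rfl | hb1
  · norm_num [klBern]
  rw [klBern, div_self hb, div_self (sub_ne_zero.mpr (Ne.symm hb1)), Real.log_one]
  ring

lemma klBern_pos (a b : ℝ) (ha : 0 ≤ a) (hab : a < b) (hb : b < 1) : 0 < klBern a b := by
  have hb0 : 0 < b := lt_of_le_of_lt ha hab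
  rcases eq_or_lt_of_le ha with h0 | h0
  · have : klBern a b = Real.log (1 / (1 - b)) := by simp [klBern, ← h0]
    rw [this, one_div, Real.log_inv]
    have : Real.log (1 - b) < 0 := Real.log_neg (by linarith) (by linarith)
    linarith
  · -- a > 0
    have h1 : Real.log (b / a) < b / a - 1 := by
      apply Real.log_lt_sub_one_of_pos (by positivity)
      intro h
      have : b = a := by field_simp at h; linarith
      linarith
    have h2 : Real.log ((1 - b) / (1 - a)) ≤ (1 - b) / (1 - a) - 1 :=
      Real.log_le_sub_one_of_pos (by apply div_pos <;> linarith)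
    have key : a * Real.log (b / a) + (1 - a) * Real.log ((1 - b) / (1 - a)) < 0 := by
      have e1 : a * (b / a - 1) = b - a := by
        field_simp
      have e2 : (1 - a) * ((1 - b) / (1 - a) - 1) = a - b := by
        have h1a : ((1:ℝ) - a) ≠ 0 := by intro h; linarith [hb, hab]
        field_simp
        ring
      nlinarith [mul_lt_mul_of_pos_left h1 h0,
        mul_le_mul_of_nonneg_left h2 (by linarith : (0:ℝ) ≤ 1 - a)]
    have eq1 : Real.log (a / b) = - Real.log (b / a) := by
      rw [← Real.log_inv]; congr 1; field_simp
    have eq2 : Real.log ((1 - a) / (1 - b)) = - Real.log ((1 - b) / (1 - a)) := by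
      rw [← Real.log_inv]; congr 1; field_simp
    rw [klBern, eq1, eq2]; linarith

/-- **Lemma.** If `x ∈ [p, q]` solves `d(x/(1−ε), q/(1−ε)) = d(p/(1−ε), q/(1−ε))/(1+c)`,
then `x ≤ (c/(1+c)) q + (1/(1+c)) p`. -/
theorem klBern_equation_solution_le (ε p q c x : ℝ) (hε0 : 0 ≤ ε) (hε1 : ε < 1)
    (hp0 : 0 ≤ p) (hpq : p ≤ q) (hq : q < 1 - ε) (hc : 0 ≤ c)
    (hx : x ∈ Set.Icc p q)
    (heq : klBern (x / (1 - ε)) (q / (1 - ε)) =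
      (1 / (1 + c)) * klBern (p / (1 - ε)) (q / (1 - ε))) :
    x ≤ (c / (1 + c)) * q + (1 / (1 + c)) * p := by
  obtain ⟨hxp, hxq⟩ := hx
  have hr : (0:ℝ) < 1 - ε := by linarith
  have hc1 : (0:ℝ) < 1 + c := by linarith
  rcases eq_or_lt_of_le hpq with rfl | hplt
  · -- p = q, so x = p
    have hxp' : x = p := le_antisymm hxq hxp
    subst hxp'
    have h1 : c / (1 + c) + 1 / (1 + c) = 1 := by
      rw [← add_div, div_eq_one_iff_eq hc1.ne']; ring
    have h2 : c / (1 + c) * x + 1 / (1 + c) * x = 1 * x := by rw [← add_mul, h1]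
    linarith
  -- p < q
  set p' := p / (1 - ε) with hp'def
  set q' := q / (1 - ε) with hq'def
  set x' := x / (1 - ε) with hx'def
  have hp'0 : 0 ≤ p' := div_nonneg hp0 hr.le
  have hq'0 : 0 < q' := div_pos (by linarith) hr
  have hq'1 : q' < 1 := (div_lt_one hr).mpr hq
  have hp'q' : p' < q' := by
    rw [hp'def, hq'def]
    exact div_lt_div_of_pos_right hplt hr
  have hx'p' : p' ≤ x' := by
    rw [hp'def, hx'def]; exact div_le_div_of_nonneg_right hxp hr.le
  have hx'q' : x' ≤ q' := by
    rw [hq'def, hx'def]; exact div_le_div_of_nonneg_right hxq hr.le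
  set l := (x - p) / (q - p) with hldef
  clear_value p' q' x' l
  have hqp : 0 < q - p := by linarith
  have hl0 : 0 ≤ l := by rw [hldef]; exact div_nonneg (by linarith) hqp.le
  have hl1 : l ≤ 1 := by rw [hldef]; exact (div_le_one hqp).mpr (by linarith)
  have hxcomb : x = l * q + (1 - l) * p := by
    rw [hldef]; field_simp; ring
  have hx'comb : x' = l * q' + (1 - l) * p' := by
    rw [hx'def, hp'def, hq'def, hxcomb]; ring
  -- convexity inequality
  have conv1 := Real.convexOn_mul_log.2 (Set.mem_Ici.mpr hq'0.le)
    (Set.mem_Ici.mpr hp'0) hl0 (by linarith : (0:ℝ) ≤ 1 - l) (by ring)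
  have conv2 := Real.convexOn_mul_log.2 (Set.mem_Ici.mpr (by linarith : (0:ℝ) ≤ 1 - q'))
    (Set.mem_Ici.mpr (by linarith : (0:ℝ) ≤ 1 - p')) hl0
    (by linarith : (0:ℝ) ≤ 1 - l) (by ring)
  simp only [smul_eq_mul] at conv1 conv2
  have hsx : l * q' + (1 - l) * p' = x' := hx'comb.symm
  have hsx2 : l * (1 - q') + (1 - l) * (1 - p') = 1 - x' := by linarith [hx'comb]
  rw [hsx] at conv1
  rw [hsx2] at conv2
  have ex : klBern x' q' = (x' * Real.log x' + (1 - x') * Real.log (1 - x'))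
      - (x' * Real.log q' + (1 - x') * Real.log (1 - q')) :=
    klBern_eq_aux x' q' (le_trans hp'0 hx'p') (by linarith) hq'0 hq'1
  have ep : klBern p' q' = (p' * Real.log p' + (1 - p') * Real.log (1 - p'))
      - (p' * Real.log q' + (1 - p') * Real.log (1 - q')) :=
    klBern_eq_aux p' q' hp'0 (by linarith) hq'0 hq'1
  have eqq : klBern q' q' = 0 := klBern_self q'
  have hB : x' * Real.log q' + (1 - x') * Real.log (1 - q')
      = l * (q' * Real.log q' + (1 - q') * Real.log (1 - q'))
        + (1 - l) * (p' * Real.log q' + (1 - p') * Real.log (1 - q')) := by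
    rw [hx'comb]; ring
  have hconv : klBern x' q' ≤ (1 - l) * klBern p' q' := by
    rw [ex, ep]
    ring_nf
    ring_nf at conv1 conv2 hB
    linarith [conv1, conv2, hB]
  have hpos : 0 < klBern p' q' := klBern_pos p' q' hp'0 hp'q' hq'1
  have hkey : 1 / (1 + c) ≤ 1 - l := by
    rw [heq] at hconv
    have : (1 / (1 + c)) * klBern p' q' ≤ (1 - l) * klBern p' q' := by linarith
    exact le_of_mul_le_mul_right (by linarith) hpos
  have h1 : c / (1 + c) + 1 / (1 + c) = 1 := by
    rw [← add_div, div_eq_one_iff_eq hc1.ne']; ring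
  have hlle : l ≤ c / (1 + c) := by linarith
  have hprod : (0:ℝ) ≤ (c / (1 + c) - l) * (q - p) :=
    mul_nonneg (by linarith) (by linarith)
  have h2 : c / (1 + c) * p + 1 / (1 + c) * p = p := by rw [← add_mul, h1, one_mul]
  rw [hxcomb]
  nlinarith [hprod, h2]

end
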